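/- arXiv:2405.20961 — 3 statements merged into one kernel-verified Lean document; each statement's English description precedes it below -/
import Mathlib

section
/- Every element h of the normal closure L of b in the free product H = <a> * <b> (a of order N, b of infinite order) can be written uniquely as a product (c_1)^{a^{t_1}} ... (c_l)^{a^{t_l}} where l ≥ 0, each c_j is a nontrivial element of <b>, each t_j is in Z/NZ, and t_j ≠ t_{j+1} for all j < l. -/
open Monoid

namespace Stmt12Aux

variable {N : ℕ}

abbrev G (N : ℕ) := Coprod (Multiplicative (ZMod N)) (Multiplicative ℤ)

def c (t : ZMod N) (β : ℤ) : G N :=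
  (Coprod.inl (Multiplicative.ofAdd t))⁻¹ * Coprod.inr (Multiplicative.ofAdd β) *
    Coprod.inl (Multiplicative.ofAdd t)

def f (w : List (ZMod N × ℤ)) : G N := (w.map fun x => c x.1 x.2).prod

def Norm (w : List (ZMod N × ℤ)) : Prop :=
  (∀ x ∈ w, x.2 ≠ 0) ∧ w.Chain' (fun x y => x.1 ≠ y.1)

theorem norm_nil : Norm ([] : List (ZMod N × ℤ)) := ⟨by simp, List.isChain_nil⟩

@[simp] theorem f_nil : f ([] : List (ZMod N × ℤ)) = 1 := rfl

@[simp] theorem f_cons (t : ZMod N) (β : ℤ) (w : List (ZMod N × ℤ)) :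
    f ((t, β) :: w) = c t β * f w := by simp [f]

theorem inr_mul (β γ : ℤ) :
    (Coprod.inr (Multiplicative.ofAdd β) : G N) * Coprod.inr (Multiplicative.ofAdd γ) =
      Coprod.inr (Multiplicative.ofAdd (β + γ)) := by
  rw [ofAdd_add, map_mul]

theorem inl_mul (s t : ZMod N) :
    (Coprod.inl (Multiplicative.ofAdd s) : G N) * Coprod.inl (Multiplicative.ofAdd t) =
      Coprod.inl (Multiplicative.ofAdd (s + t)) := by
  rw [ofAdd_add, map_mul]

theorem inl_inv (t : ZMod N) :
    (Coprod.inl (Multiplicative.ofAdd t) : G N)⁻¹ = Coprod.inl (Multiplicative.ofAdd (-t)) := by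
  rw [ofAdd_neg, map_inv]

theorem c_def' (t : ZMod N) (β : ℤ) :
    c t β = Coprod.inl (Multiplicative.ofAdd (-t)) * Coprod.inr (Multiplicative.ofAdd β) *
      Coprod.inl (Multiplicative.ofAdd t) := by
  rw [c, inl_inv]

theorem c_zero (t : ZMod N) : c t 0 = 1 := by simp [c]

theorem c_mul_same (t : ZMod N) (β γ : ℤ) : c t β * c t γ = c t (β + γ) := by
  simp only [c]
  group
  rw [mul_assoc (Coprod.inl (Multiplicative.ofAdd t) ^ (-1 : ℤ)), inr_mul]

theorem inl_mul_c (s t : ZMod N) (β : ℤ) :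
    (Coprod.inl (Multiplicative.ofAdd s) : G N) * c t β =
      c (t - s) β * Coprod.inl (Multiplicative.ofAdd s) := by
  simp only [c_def', ← mul_assoc, inl_mul, mul_assoc _ _ (Coprod.inl (Multiplicative.ofAdd s)),
    inl_mul]
  congr 2 <;> ring_nf

end Stmt12Aux

namespace Stmt12Aux

variable {N : ℕ}

def push (s : ZMod N) (β : ℤ) (w : List (ZMod N × ℤ)) : List (ZMod N × ℤ) :=
  if β = 0 then w
  else match w with
    | [] => [(s, β)]
    | (t, γ) :: rest =>
        if t = s then (if γ + β = 0 then rest else (s, γ + β) :: rest)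
        else (s, β) :: (t, γ) :: rest

theorem push_zero (s : ZMod N) (w : List (ZMod N × ℤ)) : push s 0 w = w := by simp [push]

theorem push_nil {β : ℤ} (hβ : β ≠ 0) (s : ZMod N) : push s β [] = [(s, β)] := by simp [push, hβ]

theorem push_cons_same_cancel {β γ : ℤ} (hβ : β ≠ 0) (h : γ + β = 0) (s : ZMod N)
    (rest : List (ZMod N × ℤ)) : push s β ((s, γ) :: rest) = rest := by
  simp [push, hβ, h]

theorem push_cons_same {β γ : ℤ} (hβ : β ≠ 0) (h : γ + β ≠ 0) (s : ZMod N)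
    (rest : List (ZMod N × ℤ)) : push s β ((s, γ) :: rest) = (s, γ + β) :: rest := by
  simp [push, hβ, h]

theorem push_cons_ne {β : ℤ} (hβ : β ≠ 0) {s t : ZMod N} (h : t ≠ s) (γ : ℤ)
    (rest : List (ZMod N × ℤ)) : push s β ((t, γ) :: rest) = (s, β) :: (t, γ) :: rest := by
  simp [push, hβ, h]

theorem f_push (s : ZMod N) (β : ℤ) (w : List (ZMod N × ℤ)) :
    f (push s β w) = c s β * f w := by
  by_cases hβ : β = 0
  · simp [hβ, push_zero, c_zero]
  match w with
  | [] => simp [push_nil hβ, f]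
  | (t, γ) :: rest =>
    by_cases ht : t = s
    · subst ht
      by_cases h : γ + β = 0
      · rw [push_cons_same_cancel hβ h, f_cons, ← mul_assoc, c_mul_same, add_comm, h,
          c_zero, one_mul]
      · rw [push_cons_same hβ h, f_cons, f_cons, ← mul_assoc, c_mul_same, add_comm]
    · rw [push_cons_ne hβ ht, f_cons, f_cons]

theorem norm_cons {t : ZMod N} {β : ℤ} {w : List (ZMod N × ℤ)} :
    Norm ((t, β) :: w) ↔ β ≠ 0 ∧ (∀ u ∈ w.head?, u.1 ≠ t) ∧ Norm w := by
  rw [Norm, List.Chain', List.isChain_cons]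
  constructor
  · rintro ⟨h1, h2, h3⟩
    exact ⟨h1 (t, β) List.mem_cons_self, fun u hu => (h2 u hu).symm,
      fun x hx => h1 x (List.mem_cons_of_mem _ hx), h3⟩
  · rintro ⟨h1, h2, h3, h4⟩
    refine ⟨?_, fun u hu => (h2 u hu).symm, h4⟩
    intro x hx
    rcases List.mem_cons.mp hx with hx | hx
    · simpa [hx] using h1
    · exact h3 x hx

theorem push_norm {w : List (ZMod N × ℤ)} (hw : Norm w) (s : ZMod N) (β : ℤ) :
    Norm (push s β w) := by
  by_cases hβ : β = 0
  · simpa [hβ, push_zero]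
  match w with
  | [] => exact (push_nil hβ s ▸ norm_cons.2 ⟨hβ, by simp, norm_nil⟩)
  | (t, γ) :: rest =>
    rw [norm_cons] at hw
    obtain ⟨hγ, hhd, hrest⟩ := hw
    by_cases ht : t = s
    · subst ht
      by_cases h : γ + β = 0
      · rw [push_cons_same_cancel hβ h]; exact hrest
      · rw [push_cons_same hβ h]; exact norm_cons.2 ⟨h, hhd, hrest⟩
    · rw [push_cons_ne hβ ht]
      exact norm_cons.2 ⟨hβ, by simpa using ht, norm_cons.2 ⟨hγ, hhd, hrest⟩⟩

theorem push_push {w : List (ZMod N × ℤ)} (hw : Norm w) (s : ZMod N) (β γ : ℤ) :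
    push s β (push s γ w) = push s (γ + β) w := by
  by_cases hγ : γ = 0
  · simp [hγ, push_zero]
  by_cases hβ : β = 0
  · simp [hβ, push_zero]
  match w with
  | [] =>
    rw [push_nil hγ]
    by_cases h : γ + β = 0
    · rw [push_cons_same_cancel hβ h, h, push_zero]
    · rw [push_cons_same hβ h, push_nil h]
  | (t, δ) :: rest =>
    obtain ⟨hδ, hhd, hrest⟩ := norm_cons.1 hw
    by_cases ht : t = s
    · subst ht
      by_cases hc : δ + γ = 0
      · rw [push_cons_same_cancel hγ hc]
        have hpr : push t β rest = (t, β) :: rest := by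
          match rest with
          | [] => exact push_nil hβ t
          | (u, ε) :: r2 => exact push_cons_ne hβ (by simpa using hhd (u, ε) rfl) ε r2
        by_cases hb : γ + β = 0
        · rw [hb, push_zero, hpr]
          congr 2
          omega
        · rw [push_cons_same hb (show δ + (γ + β) ≠ 0 by omega), hpr]
          congr 2
          omega
      · rw [push_cons_same hγ hc]
        by_cases hd : (δ + γ) + β = 0
        · have hb : γ + β ≠ 0 := by omega
          rw [push_cons_same_cancel hβ hd, push_cons_same_cancel hb (show δ + (γ + β) = 0 by omega)]
        · by_cases hb : γ + β = 0
          · rw [push_cons_same hβ hd, hb, push_zero]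
            congr 2
            omega
          · rw [push_cons_same hβ hd, push_cons_same hb (show δ + (γ + β) ≠ 0 by omega)]
            congr 2
            omega
    · rw [push_cons_ne hγ ht]
      by_cases hb : γ + β = 0
      · rw [push_cons_same_cancel hβ hb, hb, push_zero]
      · rw [push_cons_same hβ hb, push_cons_ne hb ht]

end Stmt12Aux

namespace Stmt12Aux

variable {N : ℕ}

def S (N : ℕ) := {x : List (ZMod N × ℤ) × ZMod N // Norm x.1}

theorem shift_norm {w : List (ZMod N × ℤ)} (hw : Norm w) (s : ZMod N) :
    Norm (w.map fun p => (p.1 - s, p.2)) := by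
  refine ⟨?_, ?_⟩
  · intro x hx
    rcases List.mem_map.1 hx with ⟨p, hp, rfl⟩
    exact hw.1 p hp
  · rw [List.Chain', List.isChain_map]
    exact hw.2.imp fun a b hab => by simpa [sub_left_inj] using hab

def shiftFun (s : ZMod N) (x : S N) : S N :=
  ⟨(x.1.1.map fun p => (p.1 - s, p.2), x.1.2 + s), shift_norm x.2 s⟩

theorem shift_shift (s t : ZMod N) (x : S N) :
    shiftFun s (shiftFun t x) = shiftFun (t + s) x := by
  refine Subtype.ext (Prod.ext ?_ ?_)
  · show (x.1.1.map _).map _ = _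
    rw [List.map_map]
    exact List.map_congr_left fun p _ => by simp [Function.comp, sub_sub]
  · show x.1.2 + t + s = x.1.2 + (t + s)
    rw [add_assoc]

theorem shift_zero (x : S N) : shiftFun 0 x = x := by
  refine Subtype.ext (Prod.ext ?_ (add_zero _))
  show x.1.1.map _ = x.1.1
  simpa using List.map_congr_left fun p _ => by simp

def shiftPerm (s : ZMod N) : Equiv.Perm (S N) where
  toFun := shiftFun s
  invFun := shiftFun (-s)
  left_inv x := by rw [shift_shift, add_neg_cancel, shift_zero]
  right_inv x := by rw [shift_shift, neg_add_cancel, shift_zero]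

def pushFun (β : ℤ) (x : S N) : S N := ⟨(push 0 β x.1.1, x.1.2), push_norm x.2 0 β⟩

theorem push_push' (β γ : ℤ) (x : S N) : pushFun β (pushFun γ x) = pushFun (γ + β) x :=
  Subtype.ext (Prod.ext (push_push x.2 0 β γ) rfl)

theorem pushFun_zero (x : S N) : pushFun 0 x = x := by
  refine Subtype.ext (Prod.ext ?_ rfl)
  exact push_zero 0 x.1.1

def pushPerm (β : ℤ) : Equiv.Perm (S N) where
  toFun := pushFun β
  invFun := pushFun (-β)
  left_inv x := by rw [push_push', add_neg_cancel, pushFun_zero]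
  right_inv x := by rw [push_push', neg_add_cancel, pushFun_zero]

def homA : Multiplicative (ZMod N) →* Equiv.Perm (S N) :=
  MonoidHom.mk' (fun m => shiftPerm m.toAdd) (by
    intro a b
    ext x
    show shiftFun (a.toAdd + b.toAdd) x = shiftFun a.toAdd (shiftFun b.toAdd x)
    rw [shift_shift, add_comm])

def homB : Multiplicative ℤ →* Equiv.Perm (S N) :=
  MonoidHom.mk' (fun m => pushPerm m.toAdd) (by
    intro a b
    ext x
    show pushFun (a.toAdd + b.toAdd) x = pushFun a.toAdd (pushFun b.toAdd x)
    rw [push_push', add_comm])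

def Φ : G N →* Equiv.Perm (S N) := Coprod.lift homA homB

def r (x : S N) : G N := f x.1.1 * Coprod.inl (Multiplicative.ofAdd x.1.2)

theorem shift_f (s : ZMod N) (w : List (ZMod N × ℤ)) :
    Coprod.inl (Multiplicative.ofAdd s) * f w =
      f (w.map fun p => (p.1 - s, p.2)) * Coprod.inl (Multiplicative.ofAdd s) := by
  induction w with
  | nil => simp
  | cons p v ih =>
    obtain ⟨t, β⟩ := p
    rw [f_cons, ← mul_assoc, inl_mul_c, mul_assoc, ih, List.map_cons, f_cons, mul_assoc]

theorem r_phi (g : G N) (x : S N) : r (Φ g x) = g * r x := by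
  induction g using Coprod.induction_on generalizing x with
  | inl m =>
    show r (shiftFun m.toAdd x) = _
    rw [r, r]
    show f (x.1.1.map _) * Coprod.inl (Multiplicative.ofAdd (x.1.2 + m.toAdd)) = _
    rw [add_comm, ← inl_mul, ← mul_assoc, ← shift_f, mul_assoc, ofAdd_toAdd]
  | inr n =>
    show r (pushFun n.toAdd x) = _
    rw [r, r]
    show f (push 0 n.toAdd x.1.1) * _ = _
    rw [f_push, ← mul_assoc]
    congr 2
    simp [c]
  | mul a b ha hb =>
    rw [map_mul, Equiv.Perm.mul_apply, ha, hb, mul_assoc]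

end Stmt12Aux

namespace Stmt12Aux

variable {N : ℕ}

theorem phi_inl (u : ZMod N) (x : S N) :
    Φ (Coprod.inl (Multiplicative.ofAdd u)) x = shiftFun u x := rfl

theorem phi_inr (β : ℤ) (x : S N) :
    Φ (Coprod.inr (Multiplicative.ofAdd β) : G N) x = pushFun β x := rfl

theorem phi_c (t : ZMod N) {β : ℤ} (hβ : β ≠ 0) {v : List (ZMod N × ℤ)} (hv : Norm v)
    (hhd : ∀ u ∈ v.head?, u.1 ≠ t) (h2 : Norm ((t, β) :: v)) :
    Φ (c t β) ⟨(v, 0), hv⟩ = ⟨((t, β) :: v, 0), h2⟩ := by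
  erw [c_def', map_mul, map_mul, Equiv.Perm.mul_apply, Equiv.Perm.mul_apply, phi_inl, phi_inr,
    phi_inl]
  have hpush : push 0 β (v.map fun p => (p.1 - t, p.2)) =
      (0, β) :: (v.map fun p => (p.1 - t, p.2)) := by
    match v with
    | [] => exact push_nil hβ 0
    | (u, γ) :: v2 =>
      exact push_cons_ne hβ (sub_ne_zero_of_ne (by simpa using hhd (u, γ) rfl)) _ _
  refine Subtype.ext (Prod.ext ?_ ?_)
  · show (push 0 β ((v.map fun p => (p.1 - t, p.2)))).map _ = _
    rw [hpush, List.map_cons, List.map_map]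
    congr 1
    · simp
    · have hc : ((fun p : ZMod N × ℤ => (p.1 - -t, p.2)) ∘ fun p => (p.1 - t, p.2)) = id := by
        funext p
        simp
      rw [hc, List.map_id]
  · show 0 + t + -t = 0
    simp

def base : S N := ⟨([], 0), norm_nil⟩

theorem phi_f {w : List (ZMod N × ℤ)} (hw : Norm w) :
    Φ (f w) (base : S N) = ⟨(w, 0), hw⟩ := by
  induction w with
  | nil => rw [f_nil, map_one]; rfl
  | cons p v ih =>
    obtain ⟨t, β⟩ := p
    obtain ⟨hβ, hhd, hv⟩ := norm_cons.1 hw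
    rw [f_cons, map_mul, Equiv.Perm.mul_apply, ih hv, phi_c t hβ hv hhd hw]

def pr (N : ℕ) : G N →* Multiplicative (ZMod N) := Coprod.fst

theorem pr_inl (m : Multiplicative (ZMod N)) : pr N (Coprod.inl m) = m := rfl

theorem pr_inr (m : Multiplicative ℤ) : pr N (Coprod.inr m) = 1 := rfl

theorem fst_f (w : List (ZMod N × ℤ)) : pr N (f w) = 1 := by
  induction w with
  | nil => simp
  | cons p v ih =>
    obtain ⟨t, β⟩ := p
    rw [f_cons, map_mul, ih, mul_one, c, map_mul, map_mul, map_inv, pr_inl, pr_inr]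
    simp

theorem main (h : G N)
    (hh : h ∈ Subgroup.normalClosure
      {(Coprod.inr (Multiplicative.ofAdd (1 : ℤ)) : G N)}) :
    ∃! w : List (ZMod N × ℤ), Norm w ∧ h = f w := by
  set x := Φ h (base : S N) with hxdef
  have hr : r x = h := by
    rw [hxdef, r_phi]
    simp [r, base, f_nil]
  have hker : pr N h = 1 := by
    have : h ∈ (pr N).ker :=
      Subgroup.normalClosure_le_normal (by
        intro y hy
        rw [Set.mem_singleton_iff] at hy
        subst hy
        simp [MonoidHom.mem_ker, pr_inr]) hh
    simpa [MonoidHom.mem_ker] using this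
  have ht : x.1.2 = 0 := by
    have : pr N (r x) = Multiplicative.ofAdd x.1.2 := by
      rw [r, map_mul, fst_f, one_mul, pr_inl]
    rw [hr, hker] at this
    simpa using this.symm
  have hfw : f x.1.1 = h := by
    rw [← hr, r, ht]
    simp
  refine ⟨x.1.1, ⟨x.2, hfw.symm⟩, ?_⟩
  rintro u ⟨hu, hhu⟩
  have hphi := phi_f hu
  rw [← hhu, ← hxdef] at hphi
  exact (congrArg (fun y : S N => y.1.1) hphi).symm

end Stmt12Aux



/-- Normal form: every element of the normal closure of `b` in `⟨a⟩ ∗ ⟨b⟩` (`a` of order `N`,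
`b` of infinite order) has a unique expression `(b^{β₁})^{a^{t₁}} ⋯ (b^{β_l})^{a^{t_l}}` with
all `β_j ≠ 0` and `t_j ≠ t_{j+1}`. -/
theorem stmt_12 (N : ℕ) (hN : 0 < N)
    (h : Coprod (Multiplicative (ZMod N)) (Multiplicative ℤ))
    (hh : h ∈ Subgroup.normalClosure
      {(Coprod.inr (Multiplicative.ofAdd (1 : ℤ)) :
        Coprod (Multiplicative (ZMod N)) (Multiplicative ℤ))}) :
    ∃! w : List (ZMod N × ℤ),
      (∀ x ∈ w, x.2 ≠ 0) ∧ w.Chain' (fun x y => x.1 ≠ y.1) ∧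
        h = (w.map (fun x =>
          (Coprod.inl (Multiplicative.ofAdd x.1) :
              Coprod (Multiplicative (ZMod N)) (Multiplicative ℤ))⁻¹ *
            Coprod.inr (Multiplicative.ofAdd x.2) *
            Coprod.inl (Multiplicative.ofAdd x.1))).prod := by
  obtain ⟨w, ⟨hn, hfw⟩, huniq⟩ := Stmt12Aux.main h hh
  refine ⟨w, ⟨hn.1, hn.2, hfw⟩, ?_⟩
  rintro u ⟨h1, h2, h3⟩
  exact huniq u ⟨⟨h1, h2⟩, h3⟩
end

section
/- Let H be a finite 2-generated group. If there exists a central element z of prime order q such that for every generating pair {x, y} of H, at least one of x, y, xy has z as a power, then H is not a Beauville group. -/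
/-- `Σ(x,y)`: the union of all conjugates of the cyclic subgroups generated by `x`, `y`
and `xy`. -/
def beauvilleSigma {H : Type*} [Group H] (x y : H) : Set H :=
  {h | ∃ (g : H) (n : ℤ),
    h = g⁻¹ * x ^ n * g ∨ h = g⁻¹ * y ^ n * g ∨ h = g⁻¹ * (x * y) ^ n * g}

/-- A group is Beauville if it is 2-generated and admits two generating pairs whose
`Σ`-sets intersect trivially. -/
def IsBeauville (H : Type*) [Group H] : Prop :=
  ∃ x₁ y₁ x₂ y₂ : H, Subgroup.closure {x₁, y₁} = ⊤ ∧ Subgroup.closure {x₂, y₂} = ⊤ ∧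
    beauvilleSigma x₁ y₁ ∩ beauvilleSigma x₂ y₂ = {1}

/-- If a finite 2-generated group has a central element `z` of prime order which is a power
of `x`, `y` or `xy` for every generating pair `{x,y}`, then it is not a Beauville group. -/
theorem stmt_14 (H : Type*) [Group H] [Finite H]
    (h2 : ∃ x y : H, Subgroup.closure {x, y} = ⊤)
    (z : H) (hz : z ∈ Subgroup.center H) (q : ℕ) (hq : q.Prime) (ho : orderOf z = q)
    (hcov : ∀ x y : H, Subgroup.closure {x, y} = ⊤ →
      (∃ n : ℤ, z = x ^ n) ∨ (∃ n : ℤ, z = y ^ n) ∨ (∃ n : ℤ, z = (x * y) ^ n)) :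
    ¬ IsBeauville H := by
  rintro ⟨x₁, y₁, x₂, y₂, hg₁, hg₂, hint⟩
  have hmem : ∀ x y : H, Subgroup.closure {x, y} = ⊤ → z ∈ beauvilleSigma x y := by
    intro x y hxy
    rcases hcov x y hxy with ⟨n, hn⟩ | ⟨n, hn⟩ | ⟨n, hn⟩ <;>
      exact ⟨1, n, by simp [hn]⟩
  have : z ∈ beauvilleSigma x₁ y₁ ∩ beauvilleSigma x₂ y₂ :=
    ⟨hmem x₁ y₁ hg₁, hmem x₂ y₂ hg₂⟩
  rw [hint] at this
  have hz1 : z = 1 := this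
  have : orderOf z = 1 := by simp [hz1]
  rw [ho] at this
  exact hq.one_lt.ne' this
end

section
/- Let N ≥ 2 and let w = (w_1, ..., w_N) be a tuple of integers with w_j = 0 for all but finitely many prescribed positions, arising as the b-exponent decomposition of an element h of the free product H = <a> * <b> with a of order N. If |h| denotes the number of syllables of h in <b>, then sum_{j=1}^{N} |h_j| ≤ |h| and |h_j| ≤ ceil(|h|/2) for each j, where (h_1,...,h_N) = Phi(h) is the section decomposition. -/
open Monoid

/-- The free product `⟨a⟩ ∗ ⟨b⟩` with `a` of order `N` and `b` of infinite order. -/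
abbrev GGSFree (N : ℕ) : Type := Coprod (Multiplicative (ZMod N)) (Multiplicative ℤ)

/-- `a^k` in the free product model. -/
abbrev ggsA (N : ℕ) (k : ZMod N) : GGSFree N := Coprod.inl (Multiplicative.ofAdd k)

/-- `b^β` in the free product model. -/
abbrev ggsBpow (N : ℕ) (β : ℤ) : GGSFree N := Coprod.inr (Multiplicative.ofAdd β)

/-- `b` in the free product model. -/
abbrev ggsB (N : ℕ) : GGSFree N := ggsBpow N 1

/-- The normal closure `L(H)` of `b`. -/
abbrev ggsL (N : ℕ) : Subgroup (GGSFree N) := Subgroup.normalClosure {ggsB N}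

/-- The syllable length of `h` with respect to the factor `⟨b⟩`: the least `l` such that `h`
can be written as `a^{s₁} b^{β₁} ⋯ a^{s_l} b^{β_l} a^{s_{l+1}}`. -/
noncomputable def ggsLen (N : ℕ) (h : GGSFree N) : ℕ :=
  sInf {l : ℕ | ∃ (s : Fin (l + 1) → ZMod N) (β : Fin l → ℤ),
    h = (List.ofFn fun j : Fin l => ggsA N (s j.castSucc) * ggsBpow N (β j)).prod *
      ggsA N (s (Fin.last l))}

namespace GGSAux

/-- word `a^{s₁} b^{β₁} ⋯ a^{s_l} b^{β_l} a^{c}` as a list of pairs plus final constant. -/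
def wordOf (N : ℕ) : List (ZMod N × ℤ) → ZMod N → GGSFree N
  | [], c => ggsA N c
  | (a, b) :: T, c => ggsA N a * ggsBpow N b * wordOf N T c

def lenSet (N : ℕ) (h : GGSFree N) : Set ℕ :=
  {l | ∃ (L : List (ZMod N × ℤ)) (c : ZMod N), L.length = l ∧ h = wordOf N L c}

variable {N : ℕ}

lemma ggsA_mul_ggsA (k c : ZMod N) : ggsA N k * ggsA N c = ggsA N (k + c) := by
  rw [← map_mul]; rfl

lemma ggsA_zero : ggsA N 0 = 1 := by
  show Coprod.inl (Multiplicative.ofAdd (0 : ZMod N)) = 1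
  rw [ofAdd_zero, map_one]

lemma ggsBpow_mul (b b' : ℤ) : ggsBpow N b * ggsBpow N b' = ggsBpow N (b + b') := by
  rw [← map_mul]; rfl

/-- prepend-A -/
lemma ggsA_mul_wordOf (k : ZMod N) : ∀ (L : List (ZMod N × ℤ)) (c : ZMod N),
    ∃ L' c', L'.length = L.length ∧ ggsA N k * wordOf N L c = wordOf N L' c'
  | [], c => ⟨[], k + c, rfl, by simp [wordOf, ggsA_mul_ggsA]⟩
  | (a, b) :: T, c => ⟨(k + a, b) :: T, c, rfl, by
      simp only [wordOf, ← ggsA_mul_ggsA, mul_assoc]⟩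

lemma decomp_cons (l : ℕ) (s : Fin (l+1) → ZMod N) (β : Fin l → ℤ) (a : ZMod N) (b : ℤ) :
    (List.ofFn fun j : Fin (l+1) =>
        ggsA N ((Fin.cons a s : Fin (l+2) → ZMod N) j.castSucc) *
          ggsBpow N ((Fin.cons b β : Fin (l+1) → ℤ) j)).prod *
      ggsA N ((Fin.cons a s : Fin (l+2) → ZMod N) (Fin.last (l+1)))
    = ggsA N a * ggsBpow N b *
      ((List.ofFn fun j : Fin l => ggsA N (s j.castSucc) * ggsBpow N (β j)).prod *
        ggsA N (s (Fin.last l))) := by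
  rw [List.ofFn_succ]
  simp only [Fin.castSucc_zero, Fin.cons_zero, ← Fin.succ_castSucc, Fin.cons_succ,
    List.prod_cons, ← Fin.succ_last, mul_assoc]

lemma fin_eq_wordOf : ∀ (l : ℕ) (s : Fin (l+1) → ZMod N) (β : Fin l → ℤ),
    (List.ofFn fun j : Fin l => ggsA N (s j.castSucc) * ggsBpow N (β j)).prod *
      ggsA N (s (Fin.last l))
    = wordOf N (List.ofFn fun j : Fin l => (s j.castSucc, β j)) (s (Fin.last l))
  | 0, s, β => by simp [wordOf]
  | (l+1), s, β => by
    have h1 : s = Fin.cons (s 0) (Fin.tail s) := (Fin.cons_self_tail s).symm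
    have h2 : β = Fin.cons (β 0) (Fin.tail β) := (Fin.cons_self_tail β).symm
    rw [h1, h2, decomp_cons, fin_eq_wordOf l (Fin.tail s) (Fin.tail β)]
    rw [List.ofFn_succ]
    simp only [wordOf, Fin.castSucc_zero, Fin.cons_zero, ← Fin.succ_castSucc, Fin.cons_succ,
      ← Fin.succ_last, Fin.tail]

lemma ggsLen_eq (h : GGSFree N) : ggsLen N h = sInf (lenSet N h) := by
  refine congrArg sInf ?_
  ext l
  constructor
  · rintro ⟨s, β, rfl⟩
    exact ⟨_, _, List.length_ofFn, fin_eq_wordOf l s β⟩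
  · rintro ⟨L, c, rfl, rfl⟩
    induction L with
    | nil => exact ⟨fun _ => c, Fin.elim0, by simp [wordOf]⟩
    | cons p T ih =>
      obtain ⟨s, β, hs⟩ := ih
      refine ⟨Fin.cons p.1 s, Fin.cons p.2 β, ?_⟩
      show wordOf N (p :: T) c = _
      simp only [List.length_cons]
      rw [decomp_cons, ← hs]
      rfl

lemma mem_lenSet_self (L : List (ZMod N × ℤ)) (c : ZMod N) :
    L.length ∈ lenSet N (wordOf N L c) := ⟨L, c, rfl, rfl⟩

lemma lenSet_nonempty (h : GGSFree N) : (lenSet N h).Nonempty := by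
  induction h using Coprod.induction_on' with
  | one => exact ⟨0, [], 0, rfl, by simp [wordOf, ggsA_zero]⟩
  | inl_mul m y ih =>
    obtain ⟨l, L, c, hl, rfl⟩ := ih
    obtain ⟨L', c', hlen, heq⟩ := ggsA_mul_wordOf m.toAdd L c
    exact ⟨l, L', c', by rw [hlen, hl], by rw [← heq]; simp [ggsA]⟩
  | inr_mul n y ih =>
    obtain ⟨l, L, c, hl, rfl⟩ := ih
    exact ⟨l + 1, (0, n.toAdd) :: L, c, by simp [hl], by simp [wordOf, ggsA_zero, ggsBpow]⟩

lemma ggsLen_le_length (h : GGSFree N) (L : List (ZMod N × ℤ)) (c : ZMod N)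
    (hw : h = wordOf N L c) : ggsLen N h ≤ L.length := by
  rw [ggsLen_eq]; exact Nat.sInf_le ⟨L, c, rfl, hw⟩

lemma exists_min_rep (h : GGSFree N) :
    ∃ L c, L.length = ggsLen N h ∧ h = wordOf N L c := by
  have := Nat.sInf_mem (lenSet_nonempty h)
  rw [← ggsLen_eq] at this
  obtain ⟨L, c, hl, hw⟩ := this
  exact ⟨L, c, hl, hw⟩

lemma ggsLen_one : ggsLen N 1 = 0 :=
  Nat.le_zero.mp (ggsLen_le_length 1 [] 0 (by simp [wordOf, ggsA_zero]))

lemma ggsLen_inl (m : Multiplicative (ZMod N)) : ggsLen N (Coprod.inl m) = 0 :=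
  Nat.le_zero.mp (ggsLen_le_length _ [] m.toAdd rfl)

lemma ggsLen_inr (n : Multiplicative ℤ) : ggsLen N (Coprod.inr n) ≤ 1 :=
  ggsLen_le_length _ [(0, n.toAdd)] 0 (by simp [wordOf, ggsA_zero, ggsBpow])

lemma wordOf_mul_wordOf : ∀ (L : List (ZMod N × ℤ)) (c : ZMod N)
    (L' : List (ZMod N × ℤ)) (c' : ZMod N),
    ∃ L'' c'', L''.length ≤ L.length + L'.length ∧
      wordOf N L c * wordOf N L' c' = wordOf N L'' c''
  | [], c, L', c' => by
    obtain ⟨L'', c'', hlen, heq⟩ := ggsA_mul_wordOf c L' c'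
    exact ⟨L'', c'', by simp [hlen], heq⟩
  | (a, b) :: T, c, L', c' => by
    obtain ⟨L₀, c₀, hlen, heq⟩ := wordOf_mul_wordOf T c L' c'
    refine ⟨(a, b) :: L₀, c₀, by simp only [List.length_cons]; omega, ?_⟩
    show ggsA N a * ggsBpow N b * wordOf N T c * wordOf N L' c' = _
    rw [mul_assoc, heq]
    rfl

lemma ggsLen_mul_le (g g' : GGSFree N) :
    ggsLen N (g * g') ≤ ggsLen N g + ggsLen N g' := by
  obtain ⟨L, c, hl, rfl⟩ := exists_min_rep g
  obtain ⟨L', c', hl', rfl⟩ := exists_min_rep g'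
  obtain ⟨L'', c'', hlen, heq⟩ := wordOf_mul_wordOf L c L' c'
  rw [heq, ← hl, ← hl']
  exact le_trans (ggsLen_le_length _ L'' c'' rfl) hlen
lemma merge_step (a : ZMod N) (b b' : ℤ) (T : List (ZMod N × ℤ)) (c : ZMod N) :
    wordOf N ((a, b) :: (0, b') :: T) c = wordOf N ((a, b + b') :: T) c := by
  show ggsA N a * ggsBpow N b * (ggsA N 0 * ggsBpow N b' * wordOf N T c)
      = ggsA N a * ggsBpow N (b + b') * wordOf N T c
  rw [ggsA_zero, one_mul, ← ggsBpow_mul, mul_assoc, mul_assoc, mul_assoc]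

lemma exists_merge : ∀ (L : List (ZMod N × ℤ)), (∃ p ∈ L.tail, p.1 = 0) → ∀ c : ZMod N,
    ∃ L' c', L'.length + 1 = L.length ∧ wordOf N L' c' = wordOf N L c
  | [], h, c => by simp at h
  | [q], h, c => by simp at h
  | (a, b) :: (a', b') :: T, h, c => by
    by_cases ha' : a' = 0
    · subst ha'
      exact ⟨(a, b + b') :: T, c, by simp, (merge_step a b b' T c).symm⟩
    · have h' : ∃ p ∈ ((a', b') :: T).tail, p.1 = 0 := by
        obtain ⟨p, hp, hp0⟩ := h
        rcases List.mem_cons.mp hp with rfl | hpT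
        · exact absurd hp0 ha'
        · exact ⟨p, hpT, hp0⟩
      obtain ⟨T', c', hlen, heq⟩ := exists_merge ((a', b') :: T) h' c
      refine ⟨(a, b) :: T', c', by simpa using hlen, ?_⟩
      show ggsA N a * ggsBpow N b * wordOf N T' c' = ggsA N a * ggsBpow N b * _
      rw [heq]

lemma exists_good_rep (h : GGSFree N) :
    ∃ L c, L.length = ggsLen N h ∧ h = wordOf N L c ∧ ∀ p ∈ L.tail, p.1 ≠ 0 := by
  obtain ⟨L, c, hl, hw⟩ := exists_min_rep h
  refine ⟨L, c, hl, hw, ?_⟩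
  by_contra hbad
  push_neg at hbad
  obtain ⟨p, hp, hp0⟩ := hbad
  obtain ⟨L', c', hlen, heq⟩ := exists_merge L ⟨p, hp, hp0⟩ c
  have : ggsLen N h ≤ L'.length := ggsLen_le_length h L' c' (by rw [heq, ← hw])
  omega

/-- partial-sum relabelling -/
def scan (k : ZMod N) : List (ZMod N × ℤ) → List (ZMod N × ℤ)
  | [] => []
  | (a, b) :: T => (k + a, b) :: scan (k + a) T

def conjFn (N : ℕ) (p : ZMod N × ℤ) : GGSFree N :=
  ggsA N p.1 * ggsBpow N p.2 * (ggsA N p.1)⁻¹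

lemma scan_length (k : ZMod N) : ∀ L : List (ZMod N × ℤ), (scan k L).length = L.length
  | [] => rfl
  | (a, b) :: T => by simp [scan, scan_length (k + a) T]

lemma key_identity : ∀ (L : List (ZMod N × ℤ)) (k c : ZMod N),
    ggsA N k * wordOf N L c =
      ((scan k L).map (conjFn N)).prod * ggsA N (k + (L.map Prod.fst).sum + c)
  | [], k, c => by simp [scan, wordOf, ggsA_mul_ggsA]
  | (a, b) :: T, k, c => by
    show ggsA N k * (ggsA N a * ggsBpow N b * wordOf N T c) = _
    have : ggsA N k * (ggsA N a * ggsBpow N b * wordOf N T c)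
        = conjFn N (k + a, b) * (ggsA N (k + a) * wordOf N T c) := by
      simp only [conjFn]
      rw [← ggsA_mul_ggsA k a]
      group
    rw [this, key_identity T (k + a) c]
    simp only [scan, List.map_cons, List.prod_cons, List.map, List.sum_cons, mul_assoc]
    congr 3
    abel

lemma scan_chain : ∀ (L : List (ZMod N × ℤ)) (k : ZMod N), (∀ p ∈ L.tail, p.1 ≠ 0) →
    (scan k L).Chain' (fun p q => p.1 ≠ q.1)
  | [], k, h => List.isChain_nil
  | [(a, b)], k, h => List.isChain_singleton _
  | (a, b) :: (a', b') :: T, k, h => by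
    have ha' : a' ≠ 0 := h (a', b') (by simp)
    have htail : ∀ p ∈ ((a', b') :: T).tail, p.1 ≠ 0 := fun p hp =>
      h p (List.mem_cons_of_mem _ hp)
    have ih := scan_chain ((a', b') :: T) (k + a) htail
    refine List.isChain_cons_cons.mpr ⟨?_, ih⟩
    show k + a ≠ k + a + a'
    intro hc
    exact ha' (by rwa [left_eq_add] at hc)

lemma sum_countP [NeZero N] : ∀ (M : List (ZMod N × ℤ)),
    ∑ i : ZMod N, M.countP (fun p => decide (p.1 = -i)) = M.length
  | [] => by simp
  | p :: T => by
    simp only [List.countP_cons, List.length_cons, Finset.sum_add_distrib, sum_countP T]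
    congr 1
    have : ∀ i : ZMod N, (if (decide (p.1 = -i)) = true then 1 else 0)
        = if i = -p.1 then 1 else 0 := by
      intro i
      by_cases hi : i = -p.1
      · subst hi; simp
      · have : p.1 ≠ -i := fun hc => hi (by rw [hc, neg_neg])
        simp [this, hi]
    rw [Finset.sum_congr rfl (fun i _ => this i)]
    simp

lemma chain_countP : ∀ (M : List (ZMod N × ℤ)),
    M.Chain' (fun p q => p.1 ≠ q.1) → ∀ c : ZMod N,
    M.countP (fun p => decide (p.1 = c)) ≤ (M.length + 1) / 2
  | [], _, c => by simp
  | [p], _, c => by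
    by_cases h : p.1 = c <;> simp [List.countP_cons, h]
  | p :: q :: T, h, c => by
    have h1 : p.1 ≠ q.1 := (List.isChain_cons_cons.mp h).1
    have h2 := ((List.isChain_cons_cons.mp h).2).tail
    have ih := chain_countP T h2 c
    have hpq : (if p.1 = c then 1 else 0) + (if q.1 = c then 1 else 0) ≤ 1 := by
      by_cases hp : p.1 = c <;> by_cases hq : q.1 = c
      · exact absurd (hp.trans hq.symm) h1
      all_goals simp [hp, hq]
    simp only [List.countP_cons, List.length_cons]
    by_cases hp : p.1 = c <;> by_cases hq : q.1 = c <;> simp [hp, hq] at hpq ⊢ <;> omega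
lemma prod_len_le {α : Type*} (f : α → GGSFree N) (g : α → ℕ)
    (hfg : ∀ p, ggsLen N (f p) ≤ g p) : ∀ Ms : List α,
    ggsLen N ((Ms.map f).prod) ≤ (Ms.map g).sum
  | [] => by simp [ggsLen_one]
  | p :: T => by
    simp only [List.map_cons, List.prod_cons, List.sum_cons]
    exact le_trans (ggsLen_mul_le _ _) (Nat.add_le_add (hfg p) (prod_len_le f g hfg T))

lemma sum_indicator_eq_countP (c : ZMod N) : ∀ Ms : List (ZMod N × ℤ),
    (Ms.map fun p => if p.1 = c then 1 else 0).sum = Ms.countP (fun p => decide (p.1 = c))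
  | [] => rfl
  | p :: T => by
    simp only [List.map_cons, List.sum_cons, List.countP_cons,
      sum_indicator_eq_countP c T]
    by_cases h : p.1 = c <;> simp [h] <;> omega

lemma coe_ggsB_zpow (n : ℤ) : (ggsB N) ^ n = ggsBpow N n := by
  rw [show ggsB N = Coprod.inr (Multiplicative.ofAdd (1:ℤ)) from rfl, ← map_zpow]
  congr 1
  rw [← ofAdd_zsmul]
  norm_num

lemma ggsA_inv (k : ZMod N) : (ggsA N k)⁻¹ = ggsA N (-k) := by
  rw [show ggsA N k = Coprod.inl (Multiplicative.ofAdd k) from rfl, ← map_inv]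
  congr 1

end GGSAux

open GGSAux in
/-- Lemma 3.2: if `Φ : L(H) → H₁^N` sends each `b^{a^k}` to the cyclic shift by `k` of the
tuple `(a₁^{e₁},…,a₁^{e_{M−1}},1,…,1,b₁)` (with `M − 1 < N`), then for `h ∈ L(H)` with
sections `(h₁,…,h_N)` one has `∑_j |h_j| ≤ |h|` and `|h_j| ≤ ⌈|h|/2⌉` for each `j`. -/
theorem stmt_18 (N N₁ M : ℕ) [NeZero N] [NeZero N₁] (hN : 2 ≤ N) (hM1 : 1 ≤ M)
    (hM : M - 1 < N) (e : ℕ → ℤ)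
    (Φ : ggsL N →* (ZMod N → GGSFree N₁))
    (hΦ : ∀ (k : ZMod N) (x : ggsL N),
      (x : GGSFree N) = (ggsA N k)⁻¹ * ggsB N * ggsA N k →
      Φ x = fun i =>
        (fun j : ZMod N => if j = 0 then ggsB N₁
          else if j.val ≤ M - 1 then ggsA N₁ ((e j.val : ZMod N₁)) else 1) (i - k))
    (x : ggsL N) :
    (∑ i : ZMod N, ggsLen N₁ (Φ x i)) ≤ ggsLen N (x : GGSFree N) ∧
      ∀ i : ZMod N, ggsLen N₁ (Φ x i) ≤ (ggsLen N (x : GGSFree N) + 1) / 2 := by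
  classical
  obtain ⟨L, c, hlen, hx, hgood⟩ := exists_good_rep (x : GGSFree N)
  set M0 := scan 0 L with hM0
  have hkey := key_identity L 0 c
  rw [ggsA_zero, one_mul] at hkey
  -- the element of <a> at the end is trivial
  set π : GGSFree N →* Multiplicative (ZMod N) :=
    Coprod.lift (MonoidHom.id _) 1 with hπ
  have hπx : π (x : GGSFree N) = 1 := by
    have hle : ggsL N ≤ π.ker := Subgroup.normalClosure_le_normal (by
      intro g hg
      rw [Set.mem_singleton_iff] at hg
      subst hg
      show π (ggsB N) = 1
      simp [hπ, Coprod.lift_apply_inr])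
    exact hle x.2
  have hπw : π ((M0.map (conjFn N)).prod) = 1 := by
    rw [map_list_prod]
    apply List.prod_eq_one
    intro y hy
    rw [List.map_map, List.mem_map] at hy
    obtain ⟨p, hp, rfl⟩ := hy
    show π (conjFn N p) = 1
    simp [conjFn, hπ, Coprod.lift_apply_inr, Coprod.lift_apply_inl]
  have hd : (0 : ZMod N) + (L.map Prod.fst).sum + c = 0 := by
    have h1 : π (wordOf N L c) = 1 := by rw [← hx]; exact hπx
    rw [hkey, map_mul, hπw, one_mul] at h1
    have : π (ggsA N (0 + (L.map Prod.fst).sum + c))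
        = Multiplicative.ofAdd (0 + (L.map Prod.fst).sum + c) := by
      simp [hπ, Coprod.lift_apply_inl]
    rw [this] at h1
    exact h1
  have hx2 : (x : GGSFree N) = (M0.map (conjFn N)).prod := by
    rw [hx, hkey, hd, ggsA_zero, mul_one]
  -- the generators as elements of the subgroup
  have hbmem : ggsB N ∈ ggsL N := Subgroup.subset_normalClosure rfl
  have hconjmem : ∀ k : ZMod N, (ggsA N k)⁻¹ * ggsB N * ggsA N k ∈ ggsL N := by
    intro k
    have := (Subgroup.normalClosure_normal (s := {ggsB N})).conj_mem _ hbmem (ggsA N k)⁻¹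
    simpa using this
  set z : ZMod N × ℤ → ggsL N :=
    fun p => (⟨_, hconjmem (-p.1)⟩ : ggsL N) ^ p.2 with hz
  have coe_z : ∀ p, ((z p : ggsL N) : GGSFree N) = conjFn N p := by
    intro p
    rw [hz]
    show (((⟨_, hconjmem (-p.1)⟩ : ggsL N) ^ p.2 : ggsL N) : GGSFree N) = _
    rw [SubgroupClass.coe_zpow]
    show ((ggsA N (-p.1))⁻¹ * ggsB N * ggsA N (-p.1)) ^ p.2 = conjFn N p
    rw [ggsA_inv, neg_neg, show ggsA N (-p.1) = (ggsA N p.1)⁻¹ from (ggsA_inv p.1).symm]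
    rw [conj_zpow, coe_ggsB_zpow]
    rfl
  have hxprod : x = (M0.map z).prod := by
    apply Subtype.coe_injective
    show ((x : ggsL N) : GGSFree N) = (ggsL N).subtype (M0.map z).prod
    rw [hx2, map_list_prod, List.map_map]
    congr 1
    apply List.map_congr_left
    intro p _
    exact (coe_z p).symm
  set F : ZMod N → GGSFree N₁ := fun j => if j = 0 then ggsB N₁
    else if j.val ≤ M - 1 then ggsA N₁ ((e j.val : ZMod N₁)) else 1 with hF
  have hΦz : ∀ p : ZMod N × ℤ, Φ (z p) = fun i => (F (i + p.1)) ^ p.2 := by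
    intro p
    rw [hz]
    show Φ ((⟨_, hconjmem (-p.1)⟩ : ggsL N) ^ p.2) = _
    rw [map_zpow, hΦ (-p.1) _ rfl]
    funext i
    show ((fun i => F (i - -p.1)) ^ p.2) i = F (i + p.1) ^ p.2
    rw [Pi.pow_apply, sub_neg_eq_add]
  have hΦxi : ∀ i : ZMod N, Φ x i = (M0.map fun p => (F (i + p.1)) ^ p.2).prod := by
    intro i
    calc Φ x i = (Pi.evalMonoidHom (fun _ : ZMod N => GGSFree N₁) i) (Φ x) := rfl
      _ = (((M0.map z).map Φ).map
            (Pi.evalMonoidHom (fun _ : ZMod N => GGSFree N₁) i)).prod := by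
          rw [hxprod, map_list_prod, map_list_prod]
      _ = (M0.map fun p => (F (i + p.1)) ^ p.2).prod := by
          rw [List.map_map, List.map_map]
          congr 1
          apply List.map_congr_left
          intro p _
          show (Pi.evalMonoidHom (fun _ : ZMod N => GGSFree N₁) i) (Φ (z p)) = _
          rw [hΦz p]
          rfl
  have hterm : ∀ (i : ZMod N) (p : ZMod N × ℤ),
      ggsLen N₁ ((F (i + p.1)) ^ p.2) ≤ if p.1 = -i then 1 else 0 := by
    intro i p
    by_cases hp : p.1 = -i
    · have h0 : i + p.1 = 0 := by rw [hp]; exact add_neg_cancel i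
      have hF0 : F (i + p.1) = ggsB N₁ := by rw [h0, hF]; simp
      rw [if_pos hp, hF0, coe_ggsB_zpow]
      exact ggsLen_inr _
    · have h0 : i + p.1 ≠ 0 := fun hc => hp (eq_neg_of_add_eq_zero_right hc)
      rw [if_neg hp]
      by_cases h2 : (i + p.1).val ≤ M - 1
      · have hF1 : F (i + p.1)
            = Coprod.inl (Multiplicative.ofAdd ((e (i + p.1).val : ZMod N₁))) := by
          rw [hF]
          simp [h0, h2]
          try rfl
        rw [hF1, ← map_zpow]
        exact le_of_eq (ggsLen_inl _)
      · have hF1 : F (i + p.1) = 1 := by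
          rw [hF]
          simp [h0, h2]
        rw [hF1, one_zpow]
        exact le_of_eq ggsLen_one
  have hbound : ∀ i : ZMod N,
      ggsLen N₁ (Φ x i) ≤ M0.countP (fun p => decide (p.1 = -i)) := by
    intro i
    rw [hΦxi i]
    calc ggsLen N₁ ((M0.map fun p => (F (i + p.1)) ^ p.2).prod)
        ≤ (M0.map fun p => if p.1 = -i then 1 else 0).sum :=
          prod_len_le _ _ (hterm i) M0
      _ = M0.countP (fun p => decide (p.1 = -i)) := sum_indicator_eq_countP (-i) M0
  constructor
  · calc ∑ i : ZMod N, ggsLen N₁ (Φ x i)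
        ≤ ∑ i : ZMod N, M0.countP (fun p => decide (p.1 = -i)) :=
          Finset.sum_le_sum fun i _ => hbound i
      _ = M0.length := sum_countP M0
      _ = L.length := scan_length 0 L
      _ = ggsLen N (x : GGSFree N) := hlen
  · intro i
    calc ggsLen N₁ (Φ x i) ≤ M0.countP (fun p => decide (p.1 = -i)) := hbound i
      _ ≤ (M0.length + 1) / 2 := chain_countP M0 (scan_chain L 0 hgood) (-i)
      _ = (ggsLen N (x : GGSFree N) + 1) / 2 := by rw [hM0, scan_length, hlen]
end
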